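/- arXiv:2308.06516 — 4 statements merged into one kernel-verified Lean document; each statement's English description precedes it below -/
import Mathlib

section
/- For a Runge--Kutta method applied to an ODE $\dot z = f(z)$ possessing a quadratic first integral $z^\top C z$ (where $C$ is symmetric and $z^\top C f(z) = 0$ for all $z$), one step satisfies the algebraic identity $z_1^\top C z_1 - z_0^\top C z_0 = 2h \sum_i b_i Z_i^\top C k_i + h^2 \sum_{i,j} M_{ij}\, k_i^\top C k_j$ where $M_{ij} = b_i b_j - b_i a_{ij} - b_j a_{ji}$, $k_i = f(Z_i)$, $Z_i = z_0 + h\sum_j a_{ij} k_j$, $z_1 = z_0 + h \sum_i b_i k_i$. Consequently, if $M = 0$ then $z_1^\top C z_1 = z_0^\top C z_0$. -/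
open Matrix

section aux

variable {d : ℕ} (C : Matrix (Fin d) (Fin d) ℝ)

private def B (x y : Fin d → ℝ) : ℝ := x ⬝ᵥ C.mulVec y

private lemma B_symm (hC : C.IsSymm) (x y : Fin d → ℝ) : B C x y = B C y x := by
  unfold B
  rw [Matrix.dotProduct_mulVec, ← Matrix.mulVec_transpose, hC.eq, dotProduct_comm]

private lemma B_add_left (x y z : Fin d → ℝ) : B C (x + y) z = B C x z + B C y z := by
  unfold B; rw [add_dotProduct]

private lemma B_add_right (x y z : Fin d → ℝ) : B C x (y + z) = B C x y + B C x z := by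
  unfold B; rw [Matrix.mulVec_add, dotProduct_add]

private lemma B_smul_left (c : ℝ) (x y : Fin d → ℝ) : B C (c • x) y = c * B C x y := by
  unfold B; rw [smul_dotProduct]; rfl

private lemma B_smul_right (c : ℝ) (x y : Fin d → ℝ) : B C x (c • y) = c * B C x y := by
  unfold B; rw [Matrix.mulVec_smul, dotProduct_smul]; rfl

private lemma B_sum_left {s : ℕ} (g : Fin s → Fin d → ℝ) (y : Fin d → ℝ) :
    B C (∑ i, g i) y = ∑ i, B C (g i) y := by
  unfold B
  simp only [dotProduct, Finset.sum_apply, Finset.sum_mul]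
  exact Finset.sum_comm

private lemma B_sum_right {s : ℕ} (g : Fin s → Fin d → ℝ) (y : Fin d → ℝ) :
    B C y (∑ i, g i) = ∑ i, B C y (g i) := by
  unfold B
  rw [show C.mulVec (∑ i, g i) = ∑ i, C.mulVec (g i) by
    have := map_sum (Matrix.mulVecLin C) g Finset.univ
    simp only [Matrix.mulVecLin_apply] at this
    exact this]
  simp only [dotProduct, Finset.sum_apply, Finset.mul_sum]
  exact Finset.sum_comm

end aux

/-- For an RK method applied to `ż = f(z)` with quadratic first integral
`zᵀCz` (`C` symmetric, `zᵀC f(z) = 0`), one step satisfies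
`z₁ᵀCz₁ - z₀ᵀCz₀ = 2h Σᵢ bᵢ Zᵢᵀ C kᵢ + h² Σᵢⱼ M_{ij} kᵢᵀ C kⱼ` with
`M_{ij} = bᵢbⱼ - bᵢa_{ij} - bⱼa_{ji}`; consequently if `M = 0` then `z₁ᵀCz₁ = z₀ᵀCz₀`. -/
theorem rk_quadratic_invariant_identity (d s : ℕ)
    (a : Fin s → Fin s → ℝ) (b : Fin s → ℝ)
    (C : Matrix (Fin d) (Fin d) ℝ) (hC : C.IsSymm)
    (f : (Fin d → ℝ) → (Fin d → ℝ))
    (hf : ∀ z, z ⬝ᵥ C.mulVec (f z) = 0)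
    (h : ℝ) (z0 : Fin d → ℝ)
    (Z : Fin s → (Fin d → ℝ))
    (hZ : ∀ i, Z i = z0 + h • ∑ j, a i j • f (Z j))
    (z1 : Fin d → ℝ)
    (hz1 : z1 = z0 + h • ∑ i, b i • f (Z i)) :
    z1 ⬝ᵥ C.mulVec z1 - z0 ⬝ᵥ C.mulVec z0
        = 2 * h * ∑ i, b i * (Z i ⬝ᵥ C.mulVec (f (Z i)))
          + h ^ 2 * ∑ i, ∑ j, (b i * b j - b i * a i j - b j * a j i) *
              (f (Z i) ⬝ᵥ C.mulVec (f (Z j))) ∧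
      ((∀ i j, b i * b j - b i * a i j - b j * a j i = 0) →
        z1 ⬝ᵥ C.mulVec z1 = z0 ⬝ᵥ C.mulVec z0) := by
  have key : z1 ⬝ᵥ C.mulVec z1 - z0 ⬝ᵥ C.mulVec z0
        = 2 * h * ∑ i, b i * (Z i ⬝ᵥ C.mulVec (f (Z i)))
          + h ^ 2 * ∑ i, ∑ j, (b i * b j - b i * a i j - b j * a j i) *
              (f (Z i) ⬝ᵥ C.mulVec (f (Z j))) := by
    show B C z1 z1 - B C z0 z0
        = 2 * h * ∑ i, b i * B C (Z i) (f (Z i))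
          + h ^ 2 * ∑ i, ∑ j, (b i * b j - b i * a i j - b j * a j i) * B C (f (Z i)) (f (Z j))
    have hS0 : B C z0 (∑ i, b i • f (Z i)) = ∑ i, b i * B C z0 (f (Z i)) := by
      rw [B_sum_right]; simp only [B_smul_right]
    have hSS : B C (∑ i, b i • f (Z i)) (∑ i, b i • f (Z i))
        = ∑ i, ∑ j, b i * b j * B C (f (Z i)) (f (Z j)) := by
      rw [B_sum_left]
      refine Finset.sum_congr rfl fun i _ => ?_
      rw [B_smul_left, B_sum_right, Finset.mul_sum]
      refine Finset.sum_congr rfl fun j _ => ?_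
      rw [B_smul_right]; ring
    have hz1' : B C z1 z1 = B C z0 z0 + 2 * h * ∑ i, b i * B C z0 (f (Z i))
        + h ^ 2 * ∑ i, ∑ j, b i * b j * B C (f (Z i)) (f (Z j)) := by
      rw [hz1]
      simp only [B_add_left, B_add_right, B_smul_left, B_smul_right]
      rw [B_symm C hC (∑ i, b i • f (Z i)) z0, hS0, hSS]
      ring
    have hZi : ∀ i, B C (Z i) (f (Z i))
        = B C z0 (f (Z i)) + h * ∑ j, a i j * B C (f (Z j)) (f (Z i)) := by
      intro i
      nth_rewrite 1 [hZ i]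
      rw [B_add_left, B_smul_left, B_sum_left]
      simp only [B_smul_left]
    have e1 : ∑ i, b i * (B C z0 (f (Z i)) + h * ∑ j, a i j * B C (f (Z j)) (f (Z i)))
        = ∑ i, b i * B C z0 (f (Z i))
          + h * ∑ i, ∑ j, b i * a i j * B C (f (Z j)) (f (Z i)) := by
      simp only [mul_add, Finset.mul_sum, Finset.sum_add_distrib]
      congr 1
      refine Finset.sum_congr rfl fun i _ => Finset.sum_congr rfl fun j _ => ?_
      ring
    have swap : ∑ i, ∑ j, b j * a j i * B C (f (Z i)) (f (Z j))
        = ∑ i, ∑ j, b i * a i j * B C (f (Z j)) (f (Z i)) := Finset.sum_comm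
    have e2 : ∑ i, ∑ j, (b i * b j - b i * a i j - b j * a j i) * B C (f (Z i)) (f (Z j))
        = ∑ i, ∑ j, b i * b j * B C (f (Z i)) (f (Z j))
          - 2 * ∑ i, ∑ j, b i * a i j * B C (f (Z j)) (f (Z i)) := by
      have step : ∑ i, ∑ j, (b i * b j - b i * a i j - b j * a j i) * B C (f (Z i)) (f (Z j))
          = ∑ i, ∑ j, (b i * b j * B C (f (Z i)) (f (Z j))
              - b i * a i j * B C (f (Z j)) (f (Z i))
              - b j * a j i * B C (f (Z i)) (f (Z j))) := by
        refine Finset.sum_congr rfl fun i _ => Finset.sum_congr rfl fun j _ => ?_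
        rw [show B C (f (Z j)) (f (Z i)) = B C (f (Z i)) (f (Z j)) from B_symm C hC _ _]
        ring
      rw [step]
      simp only [Finset.sum_sub_distrib]
      rw [swap]
      ring
    rw [hz1', e2]
    simp only [hZi]
    rw [e1]
    ring
  refine ⟨key, fun hM => ?_⟩
  have h0 : z1 ⬝ᵥ C.mulVec z1 - z0 ⬝ᵥ C.mulVec z0 = 0 := by
    rw [key]
    simp only [hf, hM, zero_mul, mul_zero, Finset.sum_const_zero, add_zero]
  linarith
end

section
/- Let $s \geq 1$, $a_1, \dots, a_s \in \mathbb{R}$, and define $b_i = a_i/2$, and the $s \times s$ matrix $A = L + \tfrac14 u v^\top$ where $L_{ij} = a_j$ if $j < i$ and $i - j$ is odd, $L_{ij} = 0$ otherwise; $u_i = (-1)^i$; $v_j = a_j (-1)^j$. Then $b_i b_j - b_i A_{ij} - b_j A_{ji} = 0$ for all $i, j$, i.e., the method $(A, b)$ is a symplectic Runge--Kutta method. -/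
/-- For parameters `a₁,…,a_s` (1-indexed), `bᵢ = aᵢ/2` and
`A = L + ¼ u vᵀ` with `L_{ij} = aⱼ` for `j < i`, `i - j` odd, else `0`;
`uᵢ = (-1)ⁱ`, `vⱼ = aⱼ(-1)ʲ`. Then `(A, b)` is a symplectic RK method:
`bᵢbⱼ - bᵢA_{ij} - bⱼA_{ji} = 0` for all `i, j`. -/
theorem composition_symmetric_projection_symplectic (s : ℕ) (hs : 1 ≤ s)
    (a b : Fin s → ℝ) (hb : ∀ i, b i = a i / 2)
    (L A : Fin s → Fin s → ℝ)
    (hL : ∀ i j : Fin s,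
      L i j = if (j : ℕ) < (i : ℕ) ∧ Odd ((i : ℕ) - (j : ℕ)) then a j else 0)
    (hA : ∀ i j : Fin s,
      A i j = L i j + (1/4 : ℝ) * ((-1 : ℝ) ^ ((i : ℕ) + 1)) *
        (a j * (-1 : ℝ) ^ ((j : ℕ) + 1))) :
    ∀ i j : Fin s, b i * b j - b i * A i j - b j * A j i = 0 := by
  intro i j
  rw [hb, hb, hA, hA, hL, hL]
  have key : (-1:ℝ)^((i:ℕ)) * (-1:ℝ)^((j:ℕ)) = (-1:ℝ)^((i:ℕ)+(j:ℕ)) := by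
    rw [← pow_add]
  rcases Nat.even_or_odd ((i:ℕ)+(j:ℕ)) with hpar | hpar
  · have hpq : (-1:ℝ)^((i:ℕ)) * (-1:ℝ)^((j:ℕ)) = 1 := by rw [key, hpar.neg_one_pow]
    have h1 : ¬ ((j:ℕ) < (i:ℕ) ∧ Odd ((i:ℕ) - (j:ℕ))) := by
      rintro ⟨hlt, hodd⟩
      simp [Nat.odd_iff, Nat.even_iff] at hodd hpar; omega
    have h2 : ¬ ((i:ℕ) < (j:ℕ) ∧ Odd ((j:ℕ) - (i:ℕ))) := by
      rintro ⟨hlt, hodd⟩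
      simp [Nat.odd_iff, Nat.even_iff] at hodd hpar; omega
    rw [if_neg h1, if_neg h2]
    linear_combination (-(a i * a j / 4)) * hpq
  · have hpq : (-1:ℝ)^((i:ℕ)) * (-1:ℝ)^((j:ℕ)) = -1 := by rw [key, hpar.neg_one_pow]
    rcases lt_trichotomy ((i:ℕ)) ((j:ℕ)) with h | h | h
    · have h1 : ¬ ((j:ℕ) < (i:ℕ) ∧ Odd ((i:ℕ) - (j:ℕ))) := by omega
      have h2 : ((i:ℕ) < (j:ℕ) ∧ Odd ((j:ℕ) - (i:ℕ))) := by
        refine ⟨h, ?_⟩; simp [Nat.odd_iff, Nat.even_iff] at hpar ⊢; omega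
      rw [if_neg h1, if_pos h2]
      linear_combination (-(a i * a j / 4)) * hpq
    · exfalso; simp [Nat.odd_iff] at hpar; omega
    · have h1 : ((j:ℕ) < (i:ℕ) ∧ Odd ((i:ℕ) - (j:ℕ))) := by
        refine ⟨h, ?_⟩; simp [Nat.odd_iff, Nat.even_iff] at hpar ⊢; omega
      have h2 : ¬ ((i:ℕ) < (j:ℕ) ∧ Odd ((j:ℕ) - (i:ℕ))) := by omega
      rw [if_pos h1, if_neg h2]
      linear_combination (-(a i * a j / 4)) * hpq
end

section
/- With $A$ and $b$ as defined from parameters $a_1,\dots,a_s$ (namely $b_i = a_i/2$, $A = L + \tfrac14 uv^\top$ with $L_{ij} = a_j$ for $j<i$ with $i-j$ odd else $0$, $u_i = (-1)^i$, $v_j = a_j(-1)^j$), the identity $b_i A_{ij} = \tfrac12 b_i b_j c_{j-i}$ holds for all $i,j$, where $c_k = 1$ if $k$ is even, $c_k = -1$ if $k$ is odd and $k > 0$, and $c_k = 3$ if $k$ is odd and $k < 0$. -/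
/-- With `A` and `b` as defined from `a₁,…,a_s` (1-indexed), the identity
`bᵢ A_{ij} = ½ bᵢ bⱼ c_{j-i}` holds, where `c_k = 1` for `k` even, `-1` for `k` odd
positive, and `3` for `k` odd negative. -/
theorem composition_method_coefficient_identity (s : ℕ) (hs : 1 ≤ s)
    (a b : Fin s → ℝ) (hb : ∀ i, b i = a i / 2)
    (L A : Fin s → Fin s → ℝ)
    (hL : ∀ i j : Fin s,
      L i j = if (j : ℕ) < (i : ℕ) ∧ Odd ((i : ℕ) - (j : ℕ)) then a j else 0)
    (hA : ∀ i j : Fin s,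
      A i j = L i j + (1/4 : ℝ) * ((-1 : ℝ) ^ ((i : ℕ) + 1)) *
        (a j * (-1 : ℝ) ^ ((j : ℕ) + 1)))
    (c : ℤ → ℝ)
    (hc : ∀ k : ℤ, c k = if Even k then 1 else if 0 < k then -1 else 3) :
    ∀ i j : Fin s,
      b i * A i j = (1/2 : ℝ) * (b i * b j) * c ((j : ℕ) - (i : ℕ) : ℤ) := by
  intro i j
  rw [hb i, hb j, hA i j, hL i j, hc]
  set m := (i : ℕ) with hm
  set n := (j : ℕ) with hn
  have key : (1/4 : ℝ) * ((-1 : ℝ) ^ (m + 1)) * (a j * (-1 : ℝ) ^ (n + 1))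
      = (1/4 : ℝ) * (a j * (-1 : ℝ) ^ (m + n)) := by
    rw [pow_succ, pow_succ, pow_add]; ring
  rw [key]
  rcases Nat.even_or_odd (m + n) with he | ho
  · have hE : Even ((n : ℤ) - (m : ℤ)) := by
      rcases he with ⟨k, hk⟩; exact ⟨(n : ℤ) - k, by omega⟩
    rw [if_pos hE, he.neg_one_pow]
    have hnegL : ¬((n : ℕ) < m ∧ Odd (m - n)) := by
      rintro ⟨h1, h2⟩
      rcases he with ⟨k, hk⟩; rcases h2 with ⟨l, hl⟩; omega
    rw [if_neg hnegL]; ring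
  · have hE : ¬ Even ((n : ℤ) - (m : ℤ)) := by
      rintro ⟨k, hk⟩
      rcases ho with ⟨l, hl⟩; omega
    rw [if_neg hE, ho.neg_one_pow]
    rcases lt_trichotomy n m with h | h | h
    · have hoddL : Odd (m - n) := by
        rcases ho with ⟨k, hk⟩; exact ⟨k - n, by omega⟩
      rw [if_pos ⟨h, hoddL⟩, if_neg (by omega : ¬ (0:ℤ) < (n : ℤ) - (m : ℤ))]
      ring
    · exfalso; rcases ho with ⟨k, hk⟩; omega
    · rw [if_neg (by omega : ¬ (n < m ∧ Odd (m - n))),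
        if_pos (by omega : (0:ℤ) < (n : ℤ) - (m : ℤ))]
      ring
end

section
/- For the symmetric projection of the leapfrog method on the duplicated system, the stages satisfy: with $Z_1 = z_0 - hk_4$, $Z_2 = z_0 + h(\tfrac12 k_1 + k_4)$, $Z_3 = z_0 + h(k_2 - k_4)$, $k_i = f(Z_i)$ for $i=1,2,3$, the projection condition $z^{**} + \mu = \hat z^* - \mu$ (with $\mu = h k_4$, $z^* = z_0 + \mu + \tfrac{h}{2}f(z_0 - \mu)$, $\hat z^* = z_0 - \mu + h f(z^*)$, $z^{**} = z^* + \tfrac{h}{2} f(\hat z^*)$) is equivalent to the linear constraint $-\tfrac12 k_1 + k_2 - \tfrac12 k_3 - 4k_4 = 0$, and then the output $z_1 = z^{**} + \mu$ equals $z_0 + h(\tfrac14 k_1 + \tfrac12 k_2 + \tfrac14 k_3)$. -/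
/-- For the symmetric projection of the leapfrog method on the duplicated
system, with `k₄ = μ/h` and stages `Z₁ = z₀ - hk₄`, `Z₂ = z₀ + h(½k₁ + k₄)`,
`Z₃ = z₀ + h(k₂ - k₄)`, `kᵢ = f(Zᵢ)`, the projection condition `z** + μ = ẑ* - μ`
is equivalent to the constraint `-½k₁ + k₂ - ½k₃ - 4k₄ = 0`, and under the constraint
the output `z₁ = z** + μ` equals `z₀ + h(¼k₁ + ½k₂ + ¼k₃)`. -/
theorem symmetric_projection_leapfrog_stages (d : ℕ)
    (f : (Fin d → ℝ) → (Fin d → ℝ)) (h : ℝ) (hh : h ≠ 0)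
    (z0 μ : Fin d → ℝ) :
    let k4 := h⁻¹ • μ
    let Z1 := z0 - h • k4
    let k1 := f Z1
    let Z2 := z0 + h • ((1/2 : ℝ) • k1 + k4)
    let k2 := f Z2
    let Z3 := z0 + h • (k2 - k4)
    let k3 := f Z3
    let zstar := z0 + μ + (h / 2) • f (z0 - μ)
    let zhstar := z0 - μ + h • f zstar
    let zstarstar := zstar + (h / 2) • f zhstar
    ((zstarstar + μ = zhstar - μ) ↔
      (-(1/2 : ℝ) • k1 + k2 - (1/2 : ℝ) • k3 - (4 : ℝ) • k4 = 0)) ∧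
    ((-(1/2 : ℝ) • k1 + k2 - (1/2 : ℝ) • k3 - (4 : ℝ) • k4 = 0) →
      zstarstar + μ
        = z0 + h • ((1/4 : ℝ) • k1 + (1/2 : ℝ) • k2 + (1/4 : ℝ) • k3)) := by
  intro k4 Z1 k1 Z2 k2 Z3 k3 zstar zhstar zstarstar
  have hk : h • k4 = μ := by
    show h • (h⁻¹ • μ) = μ
    rw [smul_smul, mul_inv_cancel₀ hh, one_smul]
  have hZ1 : z0 - μ = Z1 := by
    show z0 - μ = z0 - h • k4; rw [hk]
  have e1 : zstar = Z2 := by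
    show z0 + μ + (h / 2) • f (z0 - μ) = z0 + h • ((1/2 : ℝ) • k1 + k4)
    rw [hZ1]
    show z0 + μ + (h / 2) • k1 = z0 + h • ((1/2 : ℝ) • k1 + k4)
    rw [← hk]; module
  have e2 : zhstar = Z3 := by
    show z0 - μ + h • f zstar = z0 + h • (k2 - k4)
    rw [e1]
    show z0 - μ + h • k2 = z0 + h • (k2 - k4)
    rw [← hk]; module
  have e3 : zstarstar = Z2 + (h / 2) • k3 := by
    show zstar + (h / 2) • f zhstar = Z2 + (h / 2) • k3
    rw [e1, e2]
  constructor
  · rw [e3, e2]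
    show Z2 + (h / 2) • k3 + μ = z0 + h • (k2 - k4) - μ ↔ _
    show z0 + h • ((1/2 : ℝ) • k1 + k4) + (h / 2) • k3 + μ = z0 + h • (k2 - k4) - μ ↔ _
    rw [← hk]
    constructor
    · intro hcond
      have : h • (-(1/2 : ℝ) • k1 + k2 - (1/2 : ℝ) • k3 - (4 : ℝ) • k4) = 0 := by
        have := hcond
        rw [← sub_eq_zero] at this
        rw [show h • (-(1/2 : ℝ) • k1 + k2 - (1/2 : ℝ) • k3 - (4 : ℝ) • k4)
          = -(z0 + h • ((1/2 : ℝ) • k1 + k4) + (h / 2) • k3 + h • k4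
              - (z0 + h • (k2 - k4) - h • k4)) by module, this, neg_zero]
      rcases smul_eq_zero.mp this with h0 | h0
      · exact absurd h0 hh
      · exact h0
    · intro hcond
      rw [← sub_eq_zero]
      rw [show z0 + h • ((1/2 : ℝ) • k1 + k4) + (h / 2) • k3 + h • k4
          - (z0 + h • (k2 - k4) - h • k4)
          = -(h • (-(1/2 : ℝ) • k1 + k2 - (1/2 : ℝ) • k3 - (4 : ℝ) • k4)) by module,
        hcond, smul_zero, neg_zero]
  · intro hcond
    rw [e3]
    show z0 + h • ((1/2 : ℝ) • k1 + k4) + (h / 2) • k3 + μ = _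
    rw [← hk]
    have hc : h • (-(1/2 : ℝ) • k1 + k2 - (1/2 : ℝ) • k3 - (4 : ℝ) • k4) = 0 := by
      rw [hcond, smul_zero]
    rw [← sub_eq_zero]
    rw [show z0 + h • ((1/2 : ℝ) • k1 + k4) + (h / 2) • k3 + h • k4
        - (z0 + h • ((1/4 : ℝ) • k1 + (1/2 : ℝ) • k2 + (1/4 : ℝ) • k3))
        = -((1/2 : ℝ) • (h • (-(1/2 : ℝ) • k1 + k2 - (1/2 : ℝ) • k3 - (4 : ℝ) • k4))) by
          module, hc, smul_zero, neg_zero]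
end
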